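/- The potential Φ satisfies, for every x ∈ ℝ^m and every v ∈ ℝ^m, the Hessian identity D²Φ(x)(v,v) = 2·g_x(v) = 2·Σ_{a∈A} λ_a(x)·⟨a − μ(x), v⟩²; moreover, if the affine span of A is all of ℝ^m, then Φ is strictly convex on ℝ^m. -/

import Mathlib

open scoped BigOperators RealInnerProductSpace
open Finset

noncomputable section

/-- `ℝ^m` with the standard (Euclidean) inner product. -/
abbrev Vm (m : ℕ) := EuclideanSpace ℝ (Fin m)

/-- The diagonal covariance `K(x) = Σ_{a∈A} α_a² exp(2⟨a,x⟩)`. -/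
def covK {m : ℕ} (A : Finset (Vm m)) (α : Vm m → ℝ) (x : Vm m) : ℝ :=
  ∑ a ∈ A, (α a) ^ 2 * Real.exp (2 * ⟪a, x⟫)

/-- The potential `Φ(x) = (1/2) log K(x)`. -/
def pot {m : ℕ} (A : Finset (Vm m)) (α : Vm m → ℝ) (x : Vm m) : ℝ :=
  (1 / 2) * Real.log (covK A α x)

/-- The weights `λ_a(x) = α_a² exp(2⟨a,x⟩)/K(x)`. -/
def wt {m : ℕ} (A : Finset (Vm m)) (α : Vm m → ℝ) (a x : Vm m) : ℝ :=
  (α a) ^ 2 * Real.exp (2 * ⟪a, x⟫) / covK A α x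

/-- The moment map `μ(x) = Σ_{a∈A} λ_a(x) • a`. -/
def mmap {m : ℕ} (A : Finset (Vm m)) (α : Vm m → ℝ) (x : Vm m) : Vm m :=
  ∑ a ∈ A, wt A α a x • a

/-- The Adler–Taylor quadratic form `g_x(v) = Σ_{a∈A} λ_a(x)·⟨a − μ(x), v⟩²`. -/
def atForm {m : ℕ} (A : Finset (Vm m)) (α : Vm m → ℝ) (x v : Vm m) : ℝ :=
  ∑ a ∈ A, wt A α a x * ⟪a - mmap A α x, v⟫ ^ 2

def dK {m : ℕ} (A : Finset (Vm m)) (α : Vm m → ℝ) (x : Vm m) : Vm m →L[ℝ] ℝ :=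
  ∑ a ∈ A, ((α a) ^ 2 * Real.exp (2 * ⟪a, x⟫) * 2) • (innerSL ℝ a)

lemma hasFDerivAt_term {m : ℕ} (α : Vm m → ℝ) (a x : Vm m) :
    HasFDerivAt (fun y => (α a) ^ 2 * Real.exp (2 * ⟪a, y⟫))
      (((α a) ^ 2 * Real.exp (2 * ⟪a, x⟫) * 2) • (innerSL ℝ a : Vm m →L[ℝ] ℝ)) x := by
  have h0 : HasFDerivAt (fun y : Vm m => (⟪a, y⟫ : ℝ)) (innerSL ℝ a : Vm m →L[ℝ] ℝ) x :=
    (innerSL ℝ a).hasFDerivAt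
  have h := ((h0.const_mul (2:ℝ)).exp).const_mul ((α a) ^ 2)
  have h2 : (α a ^ 2 : ℝ) • Real.exp (2 * ⟪a, x⟫) • (2:ℝ) • (innerSL ℝ a : Vm m →L[ℝ] ℝ)
      = ((α a) ^ 2 * Real.exp (2 * ⟪a, x⟫) * 2) • (innerSL ℝ a : Vm m →L[ℝ] ℝ) := by
    rw [smul_smul, smul_smul, mul_assoc]
  rw [h2] at h
  exact h

lemma hasFDerivAt_covK {m : ℕ} (A : Finset (Vm m)) (α : Vm m → ℝ) (x : Vm m) :
    HasFDerivAt (covK A α) (dK A α x) x := by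
  exact HasFDerivAt.fun_sum fun a _ => hasFDerivAt_term α a x

lemma dK_apply {m : ℕ} (A : Finset (Vm m)) (α : Vm m → ℝ) (x v : Vm m) :
    dK A α x v = ∑ a ∈ A, (α a) ^ 2 * Real.exp (2 * ⟪a, x⟫) * 2 * ⟪a, v⟫ := by
  simp [dK]

lemma covK_pos {m : ℕ} {A : Finset (Vm m)} {α : Vm m → ℝ} (hA : A.Nonempty)
    (hα : ∀ a ∈ A, 0 < α a) (x : Vm m) : 0 < covK A α x :=
  Finset.sum_pos (fun a ha => mul_pos (pow_pos (hα a ha) 2) (Real.exp_pos _)) hA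

lemma sum_wt {m : ℕ} {A : Finset (Vm m)} {α : Vm m → ℝ} (hA : A.Nonempty)
    (hα : ∀ a ∈ A, 0 < α a) (x : Vm m) : ∑ a ∈ A, wt A α a x = 1 := by
  unfold wt
  rw [← Finset.sum_div, div_eq_one_iff_eq (covK_pos hA hα x).ne']
  rfl

lemma hasFDerivAt_pot {m : ℕ} {A : Finset (Vm m)} {α : Vm m → ℝ} (hA : A.Nonempty)
    (hα : ∀ a ∈ A, 0 < α a) (x : Vm m) :
    HasFDerivAt (pot A α) ((1/2 : ℝ) • ((covK A α x)⁻¹ • dK A α x)) x :=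
  ((hasFDerivAt_covK A α x).log (covK_pos hA hα x).ne').const_mul (1/2 : ℝ)

lemma fderiv_pot_apply {m : ℕ} {A : Finset (Vm m)} {α : Vm m → ℝ} (hA : A.Nonempty)
    (hα : ∀ a ∈ A, 0 < α a) (y v : Vm m) :
    fderiv ℝ (pot A α) y v = ∑ a ∈ A, wt A α a y * ⟪a, v⟫ := by
  rw [(hasFDerivAt_pot hA hα y).fderiv]
  have hK := (covK_pos hA hα y).ne'
  simp only [ContinuousLinearMap.smul_apply, smul_eq_mul, dK_apply, Finset.mul_sum]
  refine Finset.sum_congr rfl fun a _ => ?_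
  unfold wt
  field_simp

lemma hasFDerivAt_wt {m : ℕ} {A : Finset (Vm m)} {α : Vm m → ℝ} (hA : A.Nonempty)
    (hα : ∀ a ∈ A, 0 < α a) (a x : Vm m) :
    HasFDerivAt (fun y => wt A α a y)
      (((α a) ^ 2 * Real.exp (2 * ⟪a, x⟫)) • ((-((covK A α x) ^ 2)⁻¹) • dK A α x) +
        (covK A α x)⁻¹ • (((α a) ^ 2 * Real.exp (2 * ⟪a, x⟫) * 2) • (innerSL ℝ a : Vm m →L[ℝ] ℝ))) x := by
  have hN := hasFDerivAt_term α a x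
  have hinv : HasFDerivAt (fun y => (covK A α y)⁻¹) ((-((covK A α x) ^ 2)⁻¹) • dK A α x) x :=
    (hasDerivAt_inv (covK_pos hA hα x).ne').comp_hasFDerivAt x (hasFDerivAt_covK A α x)
  have h := hN.mul hinv
  simpa only [wt, div_eq_mul_inv, Pi.mul_def] using h

lemma hasFDerivAt_G {m : ℕ} {A : Finset (Vm m)} {α : Vm m → ℝ} (hA : A.Nonempty)
    (hα : ∀ a ∈ A, 0 < α a) (x v : Vm m) :
    HasFDerivAt (fun y => ∑ a ∈ A, wt A α a y * ⟪a, v⟫)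
      (∑ a ∈ A, (⟪a, v⟫ : ℝ) •
        (((α a) ^ 2 * Real.exp (2 * ⟪a, x⟫)) • ((-((covK A α x) ^ 2)⁻¹) • dK A α x) +
          (covK A α x)⁻¹ • (((α a) ^ 2 * Real.exp (2 * ⟪a, x⟫) * 2) • (innerSL ℝ a : Vm m →L[ℝ] ℝ)))) x := by
  refine HasFDerivAt.fun_sum fun a _ => ?_
  simpa using (hasFDerivAt_wt hA hα a x).mul_const (⟪a, v⟫ : ℝ)

lemma inner_mmap {m : ℕ} (A : Finset (Vm m)) (α : Vm m → ℝ) (x v : Vm m) :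
    (⟪mmap A α x, v⟫ : ℝ) = ∑ b ∈ A, wt A α b x * ⟪b, v⟫ := by
  unfold mmap
  rw [sum_inner]
  exact Finset.sum_congr rfl fun b _ => real_inner_smul_left b v _

lemma hessian_eq {m : ℕ} {A : Finset (Vm m)} {α : Vm m → ℝ} (hA : A.Nonempty)
    (hα : ∀ a ∈ A, 0 < α a) (x v : Vm m) :
    fderiv ℝ (fun y => fderiv ℝ (pot A α) y v) x v = 2 * atForm A α x v := by
  have hK := covK_pos hA hα x
  have hfun : (fun y => fderiv ℝ (pot A α) y v) = fun y => ∑ a ∈ A, wt A α a y * ⟪a, v⟫ :=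
    funext fun y => fderiv_pot_apply hA hα y v
  rw [hfun, (hasFDerivAt_G hA hα x v).fderiv]
  set s : ℝ := ∑ b ∈ A, wt A α b x * ⟪b, v⟫ with hs
  have hdK : dK A α x v = 2 * covK A α x * s := by
    rw [dK_apply, hs, Finset.mul_sum]
    refine Finset.sum_congr rfl fun b _ => ?_
    unfold wt
    field_simp
  simp only [ContinuousLinearMap.sum_apply, ContinuousLinearMap.add_apply,
    ContinuousLinearMap.smul_apply, smul_eq_mul, innerSL_apply_apply, hdK]
  have hterm : ∀ a ∈ A,
      (⟪a, v⟫ : ℝ) * ((α a) ^ 2 * Real.exp (2 * ⟪a, x⟫) *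
          (-((covK A α x) ^ 2)⁻¹ * (2 * covK A α x * s)) +
        (covK A α x)⁻¹ * ((α a) ^ 2 * Real.exp (2 * ⟪a, x⟫) * 2 * ⟪a, v⟫))
      = 2 * (wt A α a x * ⟪a, v⟫ ^ 2) - 2 * s * (wt A α a x * ⟪a, v⟫) := by
    intro a _
    unfold wt
    field_simp
    ring
  rw [Finset.sum_congr rfl hterm, Finset.sum_sub_distrib, ← Finset.mul_sum, ← Finset.mul_sum]
  have hat : atForm A α x v = (∑ a ∈ A, wt A α a x * ⟪a, v⟫ ^ 2) - s ^ 2 := by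
    unfold atForm
    have h1 : ∀ a ∈ A, wt A α a x * ⟪a - mmap A α x, v⟫ ^ 2
        = wt A α a x * ⟪a, v⟫ ^ 2 - 2 * s * (wt A α a x * ⟪a, v⟫) + s ^ 2 * wt A α a x := by
      intro a _
      rw [inner_sub_left, inner_mmap, ← hs]
      ring
    rw [Finset.sum_congr rfl h1, Finset.sum_add_distrib, Finset.sum_sub_distrib,
      ← Finset.mul_sum, ← Finset.mul_sum, ← hs, sum_wt hA hα]
    ring
  rw [hat, ← hs]
  ring

lemma amgm_strict {p q a b : ℝ} (hp : 0 < p) (hq : 0 < q) (hpq : p ≠ q)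
    (ha : 0 < a) (hb : 0 < b) (hab : a + b = 1) :
    p ^ a * q ^ b < a * p + b * q := by
  have h := strictConcaveOn_log_Ioi.2 (Set.mem_Ioi.2 hp) (Set.mem_Ioi.2 hq) hpq ha hb hab
  simp only [smul_eq_mul] at h
  have hsum : 0 < a * p + b * q := by positivity
  calc p ^ a * q ^ b = Real.exp (a * Real.log p + b * Real.log q) := by
        rw [Real.exp_add, Real.rpow_def_of_pos hp, Real.rpow_def_of_pos hq,
          mul_comm (Real.log p) a, mul_comm (Real.log q) b]
    _ < Real.exp (Real.log (a * p + b * q)) := Real.exp_lt_exp.2 h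
    _ = a * p + b * q := Real.exp_log hsum

lemma amgm_le {p q a b : ℝ} (hp : 0 < p) (hq : 0 < q)
    (ha : 0 < a) (hb : 0 < b) (hab : a + b = 1) :
    p ^ a * q ^ b ≤ a * p + b * q := by
  rcases eq_or_ne p q with rfl | hne
  · rw [← Real.rpow_add hp, hab, Real.rpow_one]
    nlinarith
  · exact (amgm_strict hp hq hne ha hb hab).le

set_option maxHeartbeats 1000000 in
lemma key_lt {m : ℕ} {A : Finset (Vm m)} {α : Vm m → ℝ} (hA : A.Nonempty)
    (hα : ∀ a ∈ A, 0 < α a) (htop : affineSpan ℝ (A : Set (Vm m)) = ⊤)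
    {x y : Vm m} (hxy : x ≠ y) {a b : ℝ} (ha : 0 < a) (hb : 0 < b) (hab : a + b = 1) :
    covK A α (a • x + b • y) < covK A α x ^ a * covK A α y ^ b := by
  have hU : 0 < covK A α x := covK_pos hA hα x
  have hV : 0 < covK A α y := covK_pos hA hα y
  set U := covK A α x with hU'
  set V := covK A α y with hV'
  set u : Vm m → ℝ := fun p => (α p) ^ 2 * Real.exp (2 * ⟪p, x⟫) with hu'
  set w : Vm m → ℝ := fun p => (α p) ^ 2 * Real.exp (2 * ⟪p, y⟫) with hw'
  have hu : ∀ p ∈ A, 0 < u p := fun p hp => mul_pos (pow_pos (hα p hp) 2) (Real.exp_pos _)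
  have hw : ∀ p ∈ A, 0 < w p := fun p hp => mul_pos (pow_pos (hα p hp) 2) (Real.exp_pos _)
  have hUu : ∑ p ∈ A, u p = U := rfl
  have hVw : ∑ p ∈ A, w p = V := rfl
  -- a witness where the ratios differ
  have hwit : ∃ p ∈ A, u p / U ≠ w p / V := by
    by_contra hcon
    push_neg at hcon
    set d := x - y with hd'
    have hd : d ≠ 0 := sub_ne_zero.2 hxy
    have hc : ∀ p ∈ A, (⟪p, d⟫ : ℝ) = (Real.log U - Real.log V) / 2 := by
      intro p hp
      have hcp : (0:ℝ) < (α p) ^ 2 := pow_pos (hα p hp) 2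
      have h := hcon p hp
      have h2 : Real.exp (2 * ⟪p, x⟫) * V = Real.exp (2 * ⟪p, y⟫) * U := by
        have h3 : u p * V = w p * U := by
          field_simp at h
          linarith [h]
        rw [hu', hw'] at h3
        simp only at h3
        nlinarith [h3, hcp]
      have h3 := congrArg Real.log h2
      rw [Real.log_mul (Real.exp_pos _).ne' hV.ne', Real.log_mul (Real.exp_pos _).ne' hU.ne',
        Real.log_exp, Real.log_exp] at h3
      rw [hd', inner_sub_right]
      linarith
    have hspan : vectorSpan ℝ (A : Set (Vm m)) = ⊤ := by
      rw [← direction_affineSpan, htop, AffineSubspace.direction_top]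
    have hker : ∀ w' ∈ vectorSpan ℝ (A : Set (Vm m)), (⟪w', d⟫ : ℝ) = 0 := by
      intro w' hw'
      rw [vectorSpan_def] at hw'
      induction hw' using Submodule.span_induction with
      | mem z hz =>
          obtain ⟨p, hp, p', hp', rfl⟩ := hz
          have hzz : (fun x1 x2 => x1 -ᵥ x2) p p' = p - p' := rfl
          rw [hzz, inner_sub_left, hc p hp, hc p' hp', sub_self]
      | zero => exact inner_zero_left _
      | add w₁ w₂ _ _ h1 h2 => rw [inner_add_left, h1, h2, add_zero]
      | smul c w₁ _ h1 => rw [real_inner_smul_left, h1, mul_zero]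
    have hdd : (⟪d, d⟫ : ℝ) = 0 := hker d (hspan ▸ Submodule.mem_top)
    exact hd (inner_self_eq_zero.1 hdd)
  obtain ⟨p₀, hp₀, hne⟩ := hwit
  have hz : ∀ p ∈ A, (α p) ^ 2 * Real.exp (2 * ⟪p, a • x + b • y⟫) = u p ^ a * w p ^ b := by
    intro p hp
    have hcp : (0:ℝ) < (α p) ^ 2 := pow_pos (hα p hp) 2
    have hip : (⟪p, a • x + b • y⟫ : ℝ) = a * ⟪p, x⟫ + b * ⟪p, y⟫ := by
      rw [inner_add_right, real_inner_smul_right, real_inner_smul_right]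
    rw [hip, Real.rpow_def_of_pos (hu p hp), Real.rpow_def_of_pos (hw p hp), ← Real.exp_add,
      hu', hw']
    simp only
    rw [Real.log_mul hcp.ne' (Real.exp_pos _).ne', Real.log_mul hcp.ne' (Real.exp_pos _).ne',
      Real.log_exp, Real.log_exp]
    conv_lhs => rw [← Real.exp_log hcp]
    rw [← Real.exp_add]
    congr 1
    linear_combination (-Real.log ((α p) ^ 2)) * hab
  have hUa : (0:ℝ) < U ^ a := Real.rpow_pos_of_pos hU a
  have hVb : (0:ℝ) < V ^ b := Real.rpow_pos_of_pos hV b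
  have hfact : ∀ p ∈ A, u p ^ a * w p ^ b = U ^ a * V ^ b * ((u p / U) ^ a * (w p / V) ^ b) := by
    intro p hp
    rw [Real.div_rpow (hu p hp).le hU.le, Real.div_rpow (hw p hp).le hV.le]
    field_simp
  have hsum_lt : ∑ p ∈ A, u p ^ a * w p ^ b < U ^ a * V ^ b := by
    calc ∑ p ∈ A, u p ^ a * w p ^ b
        < ∑ p ∈ A, U ^ a * V ^ b * (a * (u p / U) + b * (w p / V)) := by
          apply Finset.sum_lt_sum
          · intro p hp
            rw [hfact p hp]
            exact mul_le_mul_of_nonneg_left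
              (amgm_le (div_pos (hu p hp) hU) (div_pos (hw p hp) hV) ha hb hab)
              (by positivity)
          · refine ⟨p₀, hp₀, ?_⟩
            rw [hfact p₀ hp₀]
            exact mul_lt_mul_of_pos_left
              (amgm_strict (div_pos (hu p₀ hp₀) hU) (div_pos (hw p₀ hp₀) hV) hne ha hb hab)
              (by positivity)
      _ = U ^ a * V ^ b := by
          rw [← Finset.mul_sum]
          have hone : ∑ p ∈ A, (a * (u p / U) + b * (w p / V)) = 1 := by
            rw [Finset.sum_add_distrib, ← Finset.mul_sum, ← Finset.mul_sum,
              ← Finset.sum_div, ← Finset.sum_div, hUu, hVw, div_self hU.ne',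
              div_self hV.ne', mul_one, mul_one, hab]
          rw [hone, mul_one]
  calc covK A α (a • x + b • y) = ∑ p ∈ A, u p ^ a * w p ^ b := Finset.sum_congr rfl hz
    _ < U ^ a * V ^ b := hsum_lt

/-- The Hessian of the potential `Φ` satisfies
`D²Φ(x)(v,v) = 2 g_x(v) = 2 Σ_a λ_a(x) ⟨a − μ(x), v⟩²`, and if the affine span of `A`
is all of `ℝ^m` then `Φ` is strictly convex. -/
theorem statement0 (m : ℕ) (hm : 1 ≤ m) (A : Finset (Vm m)) (hA : A.Nonempty)
    (α : Vm m → ℝ) (hα : ∀ a ∈ A, 0 < α a) :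
    (∀ x v : Vm m,
      fderiv ℝ (fun y => fderiv ℝ (pot A α) y v) x v = 2 * atForm A α x v ∧
      atForm A α x v = ∑ a ∈ A, wt A α a x * ⟪a - mmap A α x, v⟫ ^ 2) ∧
    (affineSpan ℝ (A : Set (Vm m)) = ⊤ →
      StrictConvexOn ℝ (Set.univ : Set (Vm m)) (pot A α)) := by
  constructor
  · intro x v
    exact ⟨hessian_eq hA hα x v, rfl⟩
  · intro htop
    refine ⟨convex_univ, ?_⟩
    intro x _ y _ hxy a b ha hb hab
    have hU : 0 < covK A α x := covK_pos hA hα x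
    have hV : 0 < covK A α y := covK_pos hA hα y
    have hlt := key_lt hA hα htop hxy ha hb hab
    have hz : 0 < covK A α (a • x + b • y) := covK_pos hA hα _
    have hlog := Real.log_lt_log hz hlt
    rw [Real.log_mul (Real.rpow_pos_of_pos hU a).ne' (Real.rpow_pos_of_pos hV b).ne',
      Real.log_rpow hU, Real.log_rpow hV] at hlog
    simp only [smul_eq_mul]
    unfold pot
    linarith
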